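/- Let B be an n×n Hermitian positive definite complex matrix with diagonal normalization B̂ and potential Γ(B) = tr(B̂^{-1}) − n. Then κ(B̂) ≤ (1 + √(Γ(B)/2) + Γ(B)/2)², where κ(M) = ‖M‖·‖M^{-1}‖ is the condition number in the ℓ₂ operator norm. -/

import Mathlib

open Matrix
open scoped ComplexOrder

noncomputable section

/-- `D_B^{1/2}`: the diagonal matrix whose entries are the square roots of the
diagonal entries of `B`. -/
def sqrtDiag {n : ℕ} (B : Matrix (Fin n) (Fin n) ℂ) : Matrix (Fin n) (Fin n) ℂ :=
  Matrix.diagonal fun i => (Real.sqrt (B i i).re : ℂ)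

/-- The diagonal normalization `B̂ = D_B^{-1/2} B D_B^{-1/2}`. -/
def hatM {n : ℕ} (B : Matrix (Fin n) (Fin n) ℂ) : Matrix (Fin n) (Fin n) ℂ :=
  (sqrtDiag B)⁻¹ * B * (sqrtDiag B)⁻¹

/-- The potential function `Γ(B) = tr(B̂⁻¹) − n` (a real number for Hermitian
positive definite `B`). -/
def Gamma {n : ℕ} (B : Matrix (Fin n) (Fin n) ℂ) : ℝ :=
  (Matrix.trace ((hatM B)⁻¹)).re - n

/-- The `ℓ₂` operator norm of a matrix. -/
def opNorm {m n : ℕ} (M : Matrix (Fin m) (Fin n) ℂ) : ℝ :=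
  ‖LinearMap.toContinuousLinearMap (Matrix.toEuclideanLin M)‖

/-- The condition number `κ(M) = ‖M‖·‖M⁻¹‖` in the `ℓ₂` operator norm. -/
def kappa {n : ℕ} (M : Matrix (Fin n) (Fin n) ℂ) : ℝ :=
  opNorm M * opNorm M⁻¹

/-! ### Auxiliary lemmas -/

open scoped Matrix.Norms.L2Operator

lemma opNorm_unitary_conj {n : ℕ} (U A : Matrix (Fin n) (Fin n) ℂ)
    (hU : U ∈ Matrix.unitaryGroup (Fin n) ℂ) :
    opNorm (U * A * star U) = opNorm A := by
  show ‖U * A * star U‖ = ‖A‖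
  rw [mul_assoc, CStarRing.norm_mem_unitary_mul _ hU,
    CStarRing.norm_mul_mem_unitary _ (Unitary.star_mem hU)]

lemma opNorm_diagonal_le {n : ℕ} (d : Fin n → ℝ) {c : ℝ} (hc : 0 ≤ c)
    (h : ∀ i, |d i| ≤ c) :
    opNorm (Matrix.diagonal (fun i => (d i : ℂ))) ≤ c := by
  apply ContinuousLinearMap.opNorm_le_bound _ hc
  intro x
  have hx : ∀ i, (LinearMap.toContinuousLinearMap
      (Matrix.toEuclideanLin (Matrix.diagonal (fun i => (d i : ℂ)))) x) i
      = (d i : ℂ) * x i := by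
    intro i
    simp [Matrix.toEuclideanLin_apply, Matrix.mulVec_diagonal]
  rw [EuclideanSpace.norm_eq, EuclideanSpace.norm_eq]
  rw [show c * Real.sqrt (∑ i, ‖x i‖ ^ 2) = Real.sqrt (c ^ 2 * ∑ i, ‖x i‖ ^ 2) by
    rw [Real.sqrt_mul (sq_nonneg c), Real.sqrt_sq hc]]
  apply Real.sqrt_le_sqrt
  rw [Finset.mul_sum]
  apply Finset.sum_le_sum
  intro i _
  rw [hx i]
  rw [show ‖(d i : ℂ) * x i‖ = |d i| * ‖x i‖ by
    rw [norm_mul, Complex.norm_real, Real.norm_eq_abs], mul_pow]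
  gcongr
  exact h i

lemma abs_le_opNorm {n : ℕ} (M : Matrix (Fin n) (Fin n) ℂ) (t : ℝ) (y : Fin n → ℂ)
    (hy : y ≠ 0) (h : M *ᵥ y = (t : ℂ) • y) : |t| ≤ opNorm M := by
  set x : EuclideanSpace ℂ (Fin n) := (WithLp.equiv 2 _).symm y with hxdef
  have hTx : (LinearMap.toContinuousLinearMap (Matrix.toEuclideanLin M)) x
      = (t : ℂ) • x := by
    simp only [LinearMap.coe_toContinuousLinearMap', hxdef,
      WithLp.equiv_symm_apply, Matrix.toEuclideanLin_apply_piLp_toLp, h, WithLp.toLp_smul]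
  have h1 := (LinearMap.toContinuousLinearMap (Matrix.toEuclideanLin M)).le_opNorm x
  rw [hTx, norm_smul, Complex.norm_real, Real.norm_eq_abs] at h1
  have hxne : ‖x‖ ≠ 0 := by
    simp only [ne_eq, norm_eq_zero]
    intro hx0
    exact hy (by simpa [hxdef] using congrArg (WithLp.equiv 2 _) hx0)
  exact le_of_mul_le_mul_right h1 (lt_of_le_of_ne (norm_nonneg _) (Ne.symm hxne))

lemma opNorm_diagonal_eq {n : ℕ} (d : Fin n → ℝ) (hn : 0 < n) (hd : ∀ i, 0 < d i)
    (i1 : Fin n) (hi1 : ∀ i, d i ≤ d i1) :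
    opNorm (Matrix.diagonal (fun i => (d i : ℂ))) = d i1 := by
  refine le_antisymm (opNorm_diagonal_le d (hd i1).le fun i => ?_) ?_
  · rw [abs_of_pos (hd i)]; exact hi1 i
  · have h := abs_le_opNorm (Matrix.diagonal (fun i => (d i : ℂ))) (d i1) (Pi.single i1 1)
      (by intro h0; simpa using congrFun h0 i1) ?_
    · rwa [abs_of_pos (hd i1)] at h
    · rw [Matrix.diagonal_mulVec_single]
      funext j
      by_cases hj : j = i1 <;> simp [hj, Pi.single_apply]

lemma posDef_conj {n : ℕ} {B : Matrix (Fin n) (Fin n) ℂ} (hB : B.PosDef)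
    {C : Matrix (Fin n) (Fin n) ℂ} (hC : IsUnit C) : (Cᴴ * B * C).PosDef := by
  exact hB.conjTranspose_mul_mul_same (Matrix.mulVec_injective_iff_isUnit.mpr hC)

lemma key_ineq {a b c : ℝ} (ha : 0 < a) (hb : 0 < b) (hc : 0 ≤ c)
    (h : (a⁻¹ + a - 2) + (b⁻¹ + b - 2) ≤ 2 * c) :
    b * a⁻¹ ≤ (1 + Real.sqrt c + c) ^ 2 := by
  set p := Real.sqrt a with hpdef
  set q := Real.sqrt b with hqdef
  set s := Real.sqrt c with hsdef
  have hp : 0 < p := Real.sqrt_pos.mpr ha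
  have hq : 0 < q := Real.sqrt_pos.mpr hb
  have hs : 0 ≤ s := Real.sqrt_nonneg c
  have hp2 : p ^ 2 = a := Real.sq_sqrt ha.le
  have hq2 : q ^ 2 = b := Real.sq_sqrt hb.le
  have hs2 : s ^ 2 = c := Real.sq_sqrt hc
  have e1 : a⁻¹ + b - 2 * (q / p) = (p⁻¹ - q) ^ 2 := by
    rw [← hp2, ← hq2]; field_simp; ring
  have e2 : b⁻¹ + a - 2 * (p / q) = (q⁻¹ - p) ^ 2 := by
    rw [← hq2, ← hp2]; field_simp; ring
  have h2 : q / p + p / q - 2 ≤ s ^ 2 := by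
    rw [hs2]
    nlinarith [sq_nonneg (p⁻¹ - q), sq_nonneg (q⁻¹ - p), e1, e2, h]
  have h3 : (q / p + p / q - 2) * (p * q) = (q - p) ^ 2 := by
    field_simp; ring
  have hF : (q - p) ^ 2 ≤ s ^ 2 * (p * q) := by
    nlinarith [mul_le_mul_of_nonneg_right h2 (mul_pos hp hq).le, h3]
  have hqp : q ≤ (1 + s + s ^ 2) * p := by
    by_contra hlt
    push_neg at hlt
    have h4 : 0 < q - (1 + s + s ^ 2) * p := by linarith
    nlinarith [mul_pos hp hp, mul_nonneg (mul_nonneg hs hs) hs,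
      mul_pos h4 h4, mul_nonneg h4.le (mul_nonneg hs hp.le)]
  rw [← hs2, ← hp2, ← hq2, ← div_eq_mul_inv, div_le_iff₀ (by positivity)]
  nlinarith [mul_self_le_mul_self hq.le hqp]

lemma inv_add_sub_two_nonneg {x : ℝ} (hx : 0 < x) : 0 ≤ x⁻¹ + x - 2 := by
  have h : x⁻¹ + x - 2 = (x - 1) ^ 2 * x⁻¹ := by field_simp; ring
  rw [h]
  positivity

/-- For Hermitian positive definite `B`,
`κ(B̂) ≤ (1 + √(Γ(B)/2) + Γ(B)/2)²`. -/
theorem kappa_hat_le_of_gamma {n : ℕ} (B : Matrix (Fin n) (Fin n) ℂ) (hB : B.PosDef) :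
    kappa (hatM B) ≤ (1 + Real.sqrt (Gamma B / 2) + Gamma B / 2) ^ 2 := by
  rcases Nat.eq_zero_or_pos n with hn | hn
  · -- trivial case `n = 0`
    subst hn
    have h0 : ∀ M : Matrix (Fin 0) (Fin 0) ℂ, opNorm M = 0 := by
      intro M
      refine le_antisymm ?_ (norm_nonneg _)
      apply ContinuousLinearMap.opNorm_le_bound _ le_rfl
      intro x
      rw [EuclideanSpace.norm_eq]
      simp
    have : kappa (hatM B) = 0 := by rw [kappa, h0, h0, mul_zero]
    rw [this]
    exact sq_nonneg _
  -- main case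
  have hdiag : ∀ i, 0 < (B i i).re := by
    intro i
    have h := hB.re_dotProduct_pos (x := Pi.single i 1)
      (by intro h0; simpa using congrFun h0 i)
    simpa [Matrix.mulVec_single, dotProduct, Pi.single_apply] using h
  set r : Fin n → ℝ := fun i => Real.sqrt (B i i).re with hrdef
  have hrpos : ∀ i, 0 < r i := fun i => Real.sqrt_pos.mpr (hdiag i)
  set C : Matrix (Fin n) (Fin n) ℂ := diagonal (fun i => ((r i)⁻¹ : ℂ)) with hCdef
  have hCinv : (sqrtDiag B)⁻¹ = C := by
    apply Matrix.inv_eq_right_inv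
    rw [sqrtDiag, hCdef, Matrix.diagonal_mul_diagonal,
      show (fun i => (r i : ℂ) * ((r i)⁻¹ : ℂ)) = fun _ => (1 : ℂ) from
        funext fun i => by
          rw [← Complex.ofReal_inv, ← Complex.ofReal_mul,
            mul_inv_cancel₀ (hrpos i).ne', Complex.ofReal_one],
      Matrix.diagonal_one]
  have hCherm : Cᴴ = C := by
    rw [hCdef, Matrix.diagonal_conjTranspose,
      show (star fun i => ((r i : ℂ))⁻¹) = fun i => ((r i : ℂ))⁻¹ from
        funext fun i => by simp [Complex.conj_ofReal]]
  have hCunit : IsUnit C := by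
    rw [Matrix.isUnit_iff_isUnit_det, hCdef, Matrix.det_diagonal]
    refine (Finset.prod_ne_zero_iff.mpr fun i _ => ?_).isUnit
    simpa using (inv_pos.mpr (hrpos i)).ne'
  set A := hatM B with hAdef
  have hAeq : A = Cᴴ * B * C := by rw [hAdef, hatM, hCinv, hCherm]
  have hApd : A.PosDef := hAeq ▸ posDef_conj hB hCunit
  have hA : A.IsHermitian := hApd.isHermitian
  -- the diagonal entries of A are all 1
  have hAdiag : ∀ i, A i i = 1 := by
    intro i
    have hBii : B i i = ((r i * r i : ℝ) : ℂ) := by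
      rw [← hB.isHermitian.coe_re_apply_self i]
      exact congrArg Complex.ofReal (Real.mul_self_sqrt (hdiag i).le).symm
    have : A i i = ((r i : ℂ))⁻¹ * B i i * ((r i : ℂ))⁻¹ := by
      rw [hAeq, hCherm, hCdef, Matrix.mul_diagonal, Matrix.diagonal_mul]
    have hrne : (r i : ℂ) ≠ 0 := by exact_mod_cast (hrpos i).ne'
    rw [this, hBii]
    push_cast
    field_simp
  -- spectral decomposition
  set ev := hA.eigenvalues with hevdef
  have hevpos : ∀ i, 0 < ev i := hApd.eigenvalues_pos
  set U : Matrix (Fin n) (Fin n) ℂ := (hA.eigenvectorUnitary : Matrix (Fin n) (Fin n) ℂ) with hUdef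
  have hU : U ∈ Matrix.unitaryGroup (Fin n) ℂ := (hA.eigenvectorUnitary).2
  have hUU : star U * U = 1 := Matrix.mem_unitaryGroup_iff'.mp hU
  have hUU' : U * star U = 1 := Matrix.mem_unitaryGroup_iff.mp hU
  set D : Matrix (Fin n) (Fin n) ℂ := diagonal (fun i => (ev i : ℂ)) with hDdef
  set D' : Matrix (Fin n) (Fin n) ℂ := diagonal (fun i => (((ev i)⁻¹ : ℝ) : ℂ)) with hD'def
  have hspec : A = U * D * star U := hA.spectral_theorem
  have htr : ∀ d : Fin n → ℂ, Matrix.trace (U * diagonal d * star U) = ∑ i, d i := by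
    intro d
    rw [Matrix.trace_mul_cycle, hUU, Matrix.one_mul, Matrix.trace_diagonal]
  have hsum_ev : ∑ i, ev i = n := by
    have h1 : Matrix.trace A = ∑ i, (ev i : ℂ) := by rw [hspec, hDdef, htr]
    have h2 : Matrix.trace A = (n : ℂ) := by
      rw [Matrix.trace]
      simp [Matrix.diag, hAdiag]
    have h3 : ((∑ i, ev i : ℝ) : ℂ) = ((n : ℝ) : ℂ) := by
      push_cast
      rw [← h1, h2]
    exact_mod_cast h3
  have hDD : D * D' = 1 := by
    rw [hDdef, hD'def, Matrix.diagonal_mul_diagonal,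
      show (fun i => (ev i : ℂ) * (((ev i)⁻¹ : ℝ) : ℂ)) = fun _ => (1 : ℂ) from
        funext fun i => by
          rw [← Complex.ofReal_mul, mul_inv_cancel₀ (hevpos i).ne', Complex.ofReal_one],
      Matrix.diagonal_one]
  have hAN : A * (U * D' * star U) = 1 := by
    rw [hspec]
    have h1 : U * D * star U * (U * D' * star U)
        = U * (D * ((star U * U) * (D' * star U))) := by
      simp only [Matrix.mul_assoc]
    rw [h1, hUU, Matrix.one_mul, ← Matrix.mul_assoc D, hDD, Matrix.one_mul, hUU']
  have hNinv : A⁻¹ = U * D' * star U := Matrix.inv_eq_right_inv hAN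
  have hGamma : Gamma B = (∑ i, (ev i)⁻¹) - n := by
    rw [Gamma, ← hAdef, hNinv, hD'def, htr]
    congr 1
    rw [show (∑ i, (((ev i)⁻¹ : ℝ) : ℂ)) = ((∑ i, (ev i)⁻¹ : ℝ) : ℂ) by push_cast; rfl]
    exact Complex.ofReal_re _
  have hGamma2 : Gamma B = ∑ i, ((ev i)⁻¹ + ev i - 2) := by
    have h4 : ∑ i, ((ev i)⁻¹ + ev i - 2) = (∑ i, (ev i)⁻¹) + (∑ i, ev i) - 2 * n := by
      rw [Finset.sum_sub_distrib, Finset.sum_add_distrib]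
      simp [Finset.card_univ, mul_comm]
    rw [hGamma, h4, hsum_ev]
    ring
  have hGnonneg : 0 ≤ Gamma B := by
    rw [hGamma2]
    exact Finset.sum_nonneg fun i _ => inv_add_sub_two_nonneg (hevpos i)
  -- min and max eigenvalues
  obtain ⟨i0, -, hi0⟩ := Finset.exists_min_image Finset.univ ev ⟨⟨0, hn⟩, Finset.mem_univ _⟩
  obtain ⟨i1, -, hi1⟩ := Finset.exists_max_image Finset.univ ev ⟨⟨0, hn⟩, Finset.mem_univ _⟩
  have hnA : opNorm A = ev i1 := by
    rw [hspec, opNorm_unitary_conj _ _ hU, hDdef]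
    exact opNorm_diagonal_eq ev hn hevpos i1 fun i => hi1 i (Finset.mem_univ i)
  have hnAinv : opNorm A⁻¹ = (ev i0)⁻¹ := by
    rw [hNinv, opNorm_unitary_conj _ _ hU, hD'def]
    exact opNorm_diagonal_eq (fun i => (ev i)⁻¹) hn (fun i => inv_pos.mpr (hevpos i)) i0
      fun i => inv_anti₀ (hevpos i0) (hi0 i (Finset.mem_univ i))
  rw [kappa, hnA, hnAinv]
  by_cases hii : i0 = i1
  · rw [← hii, mul_inv_cancel₀ (hevpos i0).ne']
    nlinarith [Real.sqrt_nonneg (Gamma B / 2), hGnonneg]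
  · have hpair : ((ev i0)⁻¹ + ev i0 - 2) + ((ev i1)⁻¹ + ev i1 - 2) ≤ Gamma B := by
      rw [hGamma2]
      have h5 := Finset.sum_le_sum_of_subset_of_nonneg (Finset.subset_univ {i0, i1})
        (fun i _ _ => inv_add_sub_two_nonneg (hevpos i))
      rwa [Finset.sum_pair hii] at h5
    exact key_ineq (hevpos i0) (hevpos i1) (by linarith) (by linarith)
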